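/- Let A be a commutative unital complex Banach algebra, let (φ_n)_{n∈ℕ} be a sequence of pairwise distinct characters on A, and let (λ_n)_{n∈ℕ} be a sequence of complex numbers with ∑_{n=1}^∞ |λ_n| < ∞, not all λ_n zero, such that ∑_{n=1}^∞ λ_n φ_n(a) = 0 for every a ∈ A. Let E be the closure in the character space of A (with the Gelfand topology) of the set {φ_1, φ_2, …}, and let B be the closure, in the supremum norm of C(E, ℂ), of the set of functions {φ ↦ φ(a) : a ∈ A} (the restrictions to E of the Gelfand transforms of elements of A). Then B is a proper closed subalgebra of C(E, ℂ): B ≠ C(E, ℂ). -/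

import Mathlib

open WeakDual

/-- If a nonzero absolutely summable linear combination of distinct characters on a commutative
unital complex Banach algebra `A` vanishes, then the uniform closure `B` of the restrictions of
the Gelfand transforms of elements of `A` to the closure `E` of the set of those characters is a
proper closed subalgebra of `C(E, ℂ)`. -/
theorem closure_gelfand_restrict_ne_univ
    {A : Type*} [NormedCommRing A] [NormedAlgebra ℂ A] [CompleteSpace A]
    (φ : ℕ → characterSpace ℂ A) (hφ : Function.Injective φ)
    (l : ℕ → ℂ) (hl : Summable fun n => ‖l n‖) (hne : ∃ n, l n ≠ 0)
    (hzero : ∀ a : A, ∑' n, l n * φ n a = 0)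
    (E : Set (characterSpace ℂ A)) (hE : E = closure (Set.range φ))
    (B : Set C(E, ℂ))
    (hB : B = closure (Set.range fun a : A => (gelfandTransform ℂ A a).restrict E)) :
    B ≠ Set.univ := by
  classical
  obtain ⟨k, hk⟩ := hne
  -- E is closed, hence compact
  have hEc : IsClosed E := hE ▸ isClosed_closure
  haveI : CompactSpace E := isCompact_iff_compactSpace.mp (hEc.isCompact)
  -- the characters φ n lie in E
  have hmem : ∀ n, φ n ∈ E := fun n => hE ▸ subset_closure (Set.mem_range_self n)
  set ψ : ℕ → E := fun n => ⟨φ n, hmem n⟩ with hψ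
  have hψinj : Function.Injective ψ := fun m n h => hφ (Subtype.ext_iff.mp h)
  -- total mass
  set c : ℝ := ∑' n, ‖l n‖ with hc
  have hc0 : 0 ≤ c := tsum_nonneg fun n => norm_nonneg _
  -- choose a finite set s containing k whose complement has small tail
  have hnk : (0:ℝ) < ‖l k‖ := norm_pos_iff.mpr hk
  have hεk : (0:ℝ) < ‖l k‖ / 2 := by linarith
  have htail := (tendsto_order.1 (tendsto_tsum_compl_atTop_zero fun n => ‖l n‖)).2 _ hεk
  obtain ⟨s, hks, hs⟩ : ∃ s : Finset ℕ, k ∈ s ∧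
      (∑' n : {x // x ∉ s}, ‖l n‖) < ‖l k‖ / 2 := by
    rcases (htail.and (Filter.eventually_ge_atTop {k})).exists with ⟨s, h1, h2⟩
    exact ⟨s, h2 (Finset.mem_singleton_self k), h1⟩
  -- Urysohn function g on E : 1 at ψ k, 0 at ψ n for n ∈ s \ {k}
  have hT1 : IsClosed ((fun n => (ψ n : E)) '' ((s.erase k : Finset ℕ) : Set ℕ)) :=
    (Set.Finite.image _ (s.erase k).finite_toSet).isClosed
  have hT2 : IsClosed ({ψ k} : Set E) := isClosed_singleton
  have hdisj : Disjoint ((fun n => (ψ n : E)) '' ((s.erase k : Finset ℕ) : Set ℕ))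
      ({ψ k} : Set E) := by
    rw [Set.disjoint_singleton_right]
    rintro ⟨n, hn, hn'⟩
    have : n = k := hψinj hn'
    exact (Finset.mem_erase.mp (Finset.mem_coe.mp hn)).1 this
  obtain ⟨f, hf0, hf1, hf01⟩ := exists_continuous_zero_one_of_isClosed hT1 hT2 hdisj
  set g : C(E, ℂ) := ⟨fun x => (f x : ℂ), Complex.continuous_ofReal.comp f.continuous⟩ with hg
  have hgk : g (ψ k) = 1 := by
    simp [hg, hf1 (Set.mem_singleton _)]
  have hg0 : ∀ n ∈ s.erase k, g (ψ n) = 0 := by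
    intro n hn
    have := hf0 (Set.mem_image_of_mem _ (Finset.mem_coe.mpr hn))
    simp only [Pi.zero_apply] at this
    simp [hg, this]
  have hgbd : ∀ x, ‖g x‖ ≤ 1 := by
    intro x
    have := hf01 x
    simp only [hg, ContinuousMap.coe_mk, Complex.norm_real]
    rw [Real.norm_eq_abs, abs_le]
    exact ⟨by linarith [this.1], this.2⟩
  -- summability facts
  have hsum : ∀ h : C(E, ℂ), (∀ x, ‖h x‖ ≤ 1) → Summable fun n => l n * h (ψ n) := by
    intro h hhb
    refine Summable.of_norm (hl.of_nonneg_of_le (fun n => norm_nonneg _) fun n => ?_)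
    calc ‖l n * h (ψ n)‖ = ‖l n‖ * ‖h (ψ n)‖ := norm_mul _ _
      _ ≤ ‖l n‖ * 1 := by
          exact mul_le_mul_of_nonneg_left (hhb _) (norm_nonneg _)
      _ = ‖l n‖ := mul_one _
  have hgsum : Summable fun n => l n * g (ψ n) := hsum g hgbd
  -- the key lower bound : ‖∑ l n g(ψ n)‖ ≥ ‖l k‖/2 > 0
  have hLg : (‖l k‖ / 2 : ℝ) ≤ ‖∑' n, l n * g (ψ n)‖ := by
    have hsplit := Summable.sum_add_tsum_subtype_compl hgsum s
    have hfin : ∑ n ∈ s, l n * g (ψ n) = l k := by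
      rw [← Finset.add_sum_erase _ _ hks, hgk, mul_one]
      have : ∀ n ∈ s.erase k, l n * g (ψ n) = 0 := fun n hn => by rw [hg0 n hn, mul_zero]
      rw [Finset.sum_congr rfl this, Finset.sum_const_zero, add_zero]
    have htailbd : ‖∑' n : {x // x ∉ s}, l n * g (ψ n)‖ ≤ ∑' n : {x // x ∉ s}, ‖l n‖ := by
      refine (norm_tsum_le_tsum_norm ?_).trans (Summable.tsum_le_tsum (fun n => ?_) ?_ (hl.subtype _))
      · exact (hgsum.subtype _).norm
      · calc ‖l n.1 * g (ψ n.1)‖ ≤ ‖l n.1‖ * 1 := by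
              rw [norm_mul]; exact mul_le_mul_of_nonneg_left (hgbd _) (norm_nonneg _)
          _ = ‖l n.1‖ := mul_one _
      · exact (hgsum.subtype _).norm
    calc ‖l k‖ / 2 = ‖l k‖ - ‖l k‖ / 2 := by ring
      _ ≤ ‖l k‖ - ‖∑' n : {x // x ∉ s}, l n * g (ψ n)‖ := by
          linarith [htailbd.trans_lt hs]
      _ ≤ ‖l k + ∑' n : {x // x ∉ s}, l n * g (ψ n)‖ := by
          have h := norm_add_le (l k + ∑' n : {x // x ∉ s}, l n * g (ψ n))
            (-(∑' n : {x // x ∉ s}, l n * g (ψ n)))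
          simp only [add_neg_cancel_right, norm_neg] at h
          linarith
      _ = ‖∑' n, l n * g (ψ n)‖ := by rw [← hfin, hsplit]
  -- now suppose B = univ; then g ∈ closure of range, contradiction
  intro hBuniv
  have hgB : g ∈ closure (Set.range fun a : A => (gelfandTransform ℂ A a).restrict E) := by
    rw [← hB, hBuniv]; trivial
  -- show ‖∑ l n g(ψ n)‖ ≤ c * ε for all ε > 0
  have hkey : ∀ ε : ℝ, 0 < ε → ‖∑' n, l n * g (ψ n)‖ ≤ c * ε := by
    intro ε hε
    obtain ⟨_, ⟨a, rfl⟩, hd⟩ := Metric.mem_closure_iff.mp hgB ε hε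
    have hra : ∀ n, ((gelfandTransform ℂ A a).restrict E) (ψ n) = φ n a := fun n => rfl
    have hasum : Summable fun n => l n * φ n a := by
      refine Summable.of_norm (hl.mul_right ‖((gelfandTransform ℂ A a).restrict E : C(E,ℂ))‖
        |>.of_nonneg_of_le (fun n => norm_nonneg _) fun n => ?_)
      rw [norm_mul, ← hra n]
      exact mul_le_mul_of_nonneg_left (((gelfandTransform ℂ A a).restrict E).norm_coe_le_norm _)
        (norm_nonneg _)
    have h0 : ∑' n, l n * φ n a = 0 := hzero a
    calc ‖∑' n, l n * g (ψ n)‖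
        = ‖∑' n, (l n * g (ψ n) - l n * φ n a)‖ := by
          rw [Summable.tsum_sub hgsum hasum, h0, sub_zero]
      _ ≤ ∑' n, ‖l n * g (ψ n) - l n * φ n a‖ := by
          refine norm_tsum_le_tsum_norm ?_
          exact (hgsum.sub hasum).norm
      _ ≤ ∑' n, ‖l n‖ * ε := by
          refine Summable.tsum_le_tsum (fun n => ?_) (hgsum.sub hasum).norm (hl.mul_right ε)
          rw [← mul_sub, norm_mul]
          refine mul_le_mul_of_nonneg_left ?_ (norm_nonneg _)
          calc ‖g (ψ n) - φ n a‖
              = dist (g (ψ n)) (((gelfandTransform ℂ A a).restrict E) (ψ n)) := by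
                rw [dist_eq_norm, hra]
            _ ≤ dist g ((gelfandTransform ℂ A a).restrict E) :=
                ContinuousMap.dist_apply_le_dist _
            _ ≤ ε := le_of_lt hd
      _ = c * ε := by rw [tsum_mul_right]
  -- derive contradiction
  have := hkey (‖l k‖ / (4 * (c + 1))) (div_pos hnk (by positivity))
  have h2 : (c + 1) * (‖l k‖ / (4 * (c + 1))) = ‖l k‖ / 4 := by
    field_simp
  have h1 : c * (‖l k‖ / (4 * (c + 1))) ≤ ‖l k‖ / 4 := by
    rw [← h2]
    exact mul_le_mul_of_nonneg_right (by linarith) (by positivity)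
  linarith [hLg.trans this]
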